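/- Let α ≥ 0 be a real number. If φ : ℝ → ℝ is a twice differentiable function satisfying φ''(η) + 2η φ'(η) − 2α φ(η) = 0 for all η ∈ ℝ, then there exist constants c₁, c₂ ∈ ℝ such that φ(η) = c₁ M(−α/2, 1/2, −η²) + c₂ η M(−α/2 + 1/2, 3/2, −η²) for all η ∈ ℝ. -/

import Mathlib

/-- Kummer confluent hypergeometric function `M(a,b,z) = ∑ (a)ₛ/((b)ₛ s!) zˢ`. -/
noncomputable def kummerM (a b z : ℝ) : ℝ :=
  ∑' n : ℕ, ((ascPochhammer ℝ n).eval a / ((ascPochhammer ℝ n).eval b * n.factorial)) * z ^ n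

/-- Error function `erf z = (2/√π) ∫₀ᶻ e^{-u²} du`. -/
noncomputable def erf (z : ℝ) : ℝ := (2 / Real.sqrt Real.pi) * ∫ u in (0:ℝ)..z, Real.exp (-u^2)

/-- Complementary error function. -/
noncomputable def erfc (z : ℝ) : ℝ := 1 - erf z

/-- Repeated integrals of the complementary error function:
`i⁰erfc = erfc`, `iⁿ⁺¹erfc z = ∫_z^∞ iⁿerfc t dt`. -/
noncomputable def inerfc : ℕ → ℝ → ℝ
  | 0 => erfc
  | (n+1) => fun z => ∫ t in Set.Ici z, inerfc n t


section KummerAux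

open Filter Topology Set

noncomputable def kC (a b : ℝ) (n : ℕ) : ℝ :=
  (ascPochhammer ℝ n).eval a / ((ascPochhammer ℝ n).eval b * n.factorial)

lemma poch_pos {b : ℝ} (hb : 0 < b) (n : ℕ) : 0 < (ascPochhammer ℝ n).eval b := by
  induction n with
  | zero => simp
  | succ n ih =>
    rw [ascPochhammer_succ_right]
    simp only [Polynomial.eval_mul, Polynomial.eval_add, Polynomial.eval_X,
      Polynomial.eval_natCast]
    have : (0:ℝ) < b + n := by positivity
    positivity

lemma kC_zero (a b : ℝ) : kC a b 0 = 1 := by simp [kC]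

lemma kC_succ (a b : ℝ) (hb : 0 < b) (n : ℕ) :
    kC a b (n+1) * (((n:ℝ)+1) * (b+n)) = kC a b n * (a+n) := by
  have hpb : (0:ℝ) < (ascPochhammer ℝ n).eval b := poch_pos hb n
  have hbn : (0:ℝ) < b + n := by positivity
  have hfac : (0:ℝ) < (n.factorial : ℝ) := by exact_mod_cast n.factorial_pos
  unfold kC
  rw [ascPochhammer_succ_right]
  simp only [Polynomial.eval_mul, Polynomial.eval_add, Polynomial.eval_X,
    Polynomial.eval_natCast, Nat.factorial_succ, Nat.cast_mul, Nat.cast_add, Nat.cast_one]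
  field_simp

def Good (B : ℝ) (c : ℕ → ℝ) : Prop := ∀ n : ℕ, 1 ≤ n → |c (n+1)| * ((n:ℝ)+1) ≤ B * |c n|

lemma good_shift {B : ℝ} {c : ℕ → ℝ} (hc : Good B c) :
    Good B (fun n => ((n:ℝ)+1) * c (n+1)) := by
  intro n _
  have h := hc (n+1) (by omega)
  push_cast at h ⊢
  simp only [abs_mul]
  have h1 : |((n:ℝ)+1+1)| = (n:ℝ)+2 := by
    rw [abs_of_pos]; ring; positivity
  have h2 : |((n:ℝ)+1)| = (n:ℝ)+1 := by
    rw [abs_of_pos]; positivity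
  rw [h1, h2]
  nlinarith [abs_nonneg (c (n+1)), abs_nonneg (c (n+2)), Nat.cast_nonneg (α := ℝ) n]

lemma good_kC (a b : ℝ) (hb : 0 < b) : Good (|a| + 1) (kC a b) := by
  intro n hn
  have h := kC_succ a b hb n
  have hbn : (0:ℝ) < b + n := by positivity
  have h' : |kC a b (n+1)| * (((n:ℝ)+1) * (b+n)) = |kC a b n| * |a + n| := by
    rw [show |kC a b (n+1)| * (((n:ℝ)+1)*(b+n)) = |kC a b (n+1) * (((n:ℝ)+1)*(b+n))| from by
      rw [abs_mul, abs_of_pos (show (0:ℝ) < ((n:ℝ)+1)*(b+n) by positivity)], h, abs_mul]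
  have han : |a + (n:ℝ)| ≤ |a| + n := by
    calc |a + (n:ℝ)| ≤ |a| + |(n:ℝ)| := abs_add_le _ _
    _ = |a| + n := by rw [abs_of_nonneg (show (0:ℝ) ≤ (n:ℝ) from Nat.cast_nonneg n)]
  have hn1 : (1:ℝ) ≤ n := by exact_mod_cast hn
  have key : |kC a b (n+1)| * ((n:ℝ)+1) * (b+n) ≤ ((|a|+1) * |kC a b n|) * (b+n) := by
    nlinarith [abs_nonneg (kC a b n), abs_nonneg a,
      mul_le_mul_of_nonneg_left han (abs_nonneg (kC a b n)),
      mul_nonneg (mul_nonneg (abs_nonneg a) (abs_nonneg (kC a b n))) (le_of_lt hb),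
      mul_nonneg (abs_nonneg (kC a b n)) (le_of_lt hb),
      mul_nonneg (mul_nonneg (abs_nonneg a) (abs_nonneg (kC a b n))) (by linarith : (0:ℝ) ≤ (n:ℝ)-1)]
  exact le_of_mul_le_mul_right key hbn

lemma good_summable_norm {B : ℝ} {c : ℕ → ℝ} (hc : Good B c) {R : ℝ} (hR : 0 ≤ R) :
    Summable (fun n => |c n| * R ^ n) := by
  apply summable_of_ratio_norm_eventually_le (r := 1/2) (by norm_num)
  filter_upwards [eventually_ge_atTop (max 1 (⌈2*B*R⌉₊ + 1))] with n hn
  have hn1 : 1 ≤ n := le_trans (le_max_left _ _) hn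
  have hn2 : 2*B*R ≤ (n:ℝ) := by
    have := Nat.le_ceil (2*B*R)
    have h2 : (⌈2*B*R⌉₊ + 1 : ℕ) ≤ n := le_trans (le_max_right _ _) hn
    have : ((⌈2*B*R⌉₊ : ℝ)) ≤ n := by exact_mod_cast le_trans (Nat.le_succ _) h2
    linarith [Nat.le_ceil (2*B*R)]
  have h := hc n hn1
  have hRn : (0:ℝ) ≤ R ^ n := by positivity
  simp only [norm_mul, norm_abs_eq_norm, Real.norm_eq_abs, abs_pow, abs_of_nonneg hR, abs_abs]
  rw [pow_succ]
  have key : |c (n+1)| * ((n:ℝ)+1) * (R^n * R) ≤ B * |c n| * (R^n * R) := by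
    apply mul_le_mul_of_nonneg_right h (by positivity)
  have hn0 : (0:ℝ) < (n:ℝ) + 1 := by positivity
  rw [div_mul_eq_mul_div, le_div_iff₀ (by norm_num : (0:ℝ) < 2)] at *
  nlinarith [abs_nonneg (c n), abs_nonneg (c (n+1)), mul_nonneg (abs_nonneg (c n)) hRn]

lemma good_summable {B : ℝ} {c : ℕ → ℝ} (hc : Good B c) (z : ℝ) :
    Summable (fun n => c n * z ^ n) := by
  apply Summable.of_norm
  apply Summable.congr (good_summable_norm hc (abs_nonneg z))
  intro n
  simp [abs_mul, abs_pow]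

lemma good_hasDerivAt {B : ℝ} {c : ℕ → ℝ} (hc : Good B c) (z : ℝ) :
    HasDerivAt (fun x => ∑' n : ℕ, c n * x ^ n) (∑' n : ℕ, ((n:ℝ)+1) * c (n+1) * z ^ n) z := by
  set R : ℝ := |z| + 1 with hR
  have hR1 : (1:ℝ) ≤ R := by rw [hR]; linarith [abs_nonneg z]
  have hR0 : (0:ℝ) ≤ R := by linarith
  set u : ℕ → ℝ := fun n => (n:ℝ) * |c n| * R ^ n with hu
  have hus : Summable u := by
    rw [← summable_nat_add_iff 1]
    have : Summable (fun n : ℕ => |((n:ℝ)+1) * c (n+1)| * R ^ n * R) := by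
      apply Summable.mul_right
      exact good_summable_norm (good_shift hc) hR0
    apply this.congr
    intro n
    have : |((n:ℝ)+1) * c (n+1)| = ((n:ℝ)+1) * |c (n+1)| := by
      rw [abs_mul, abs_of_pos]; positivity
    simp only [hu, this]
    push_cast
    ring
  have key : HasDerivAt (fun x => ∑' n, c n * x ^ n)
      (∑' n, c n * ((n:ℝ) * z ^ (n-1))) z := by
    apply hasDerivAt_tsum_of_isPreconnected hus Metric.isOpen_ball
      (convex_ball (0:ℝ) R).isPreconnected
      (g := fun n x => c n * x ^ n) (g' := fun n x => c n * ((n:ℝ) * x ^ (n-1)))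
      (y₀ := 0)
    · intro n y _
      exact (hasDerivAt_pow n y).const_mul (c n)
    · intro n y hy
      have hyR : |y| ≤ R := by
        rw [Metric.mem_ball, Real.dist_eq, sub_zero] at hy
        linarith
      simp only [Real.norm_eq_abs, abs_mul, hu]
      rw [abs_of_nonneg (show (0:ℝ) ≤ (n:ℝ) from Nat.cast_nonneg n), abs_pow]
      have h1 : |y| ^ (n-1) ≤ R ^ (n-1) := pow_le_pow_left₀ (abs_nonneg y) hyR _
      have h2 : R ^ (n-1) ≤ R ^ n := pow_le_pow_right₀ hR1 (Nat.sub_le n 1)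
      calc |c n| * ((n:ℝ) * |y| ^ (n-1)) ≤ |c n| * ((n:ℝ) * R ^ n) := by
            apply mul_le_mul_of_nonneg_left _ (abs_nonneg _)
            exact mul_le_mul_of_nonneg_left (le_trans h1 h2) (Nat.cast_nonneg n)
        _ = (n:ℝ) * |c n| * R ^ n := by ring
    · rw [Metric.mem_ball, dist_zero_right, norm_zero, hR]; positivity
    · apply summable_of_ne_finset_zero (s := {0})
      intro n hn
      simp only [Finset.mem_singleton] at hn
      rw [zero_pow hn, mul_zero]
    · rw [Metric.mem_ball, Real.dist_eq, sub_zero, hR]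
      linarith
  convert key using 1
  have hsum : Summable (fun n => c n * ((n:ℝ) * z ^ (n-1))) := by
    apply Summable.of_norm
    apply Summable.of_nonneg_of_le (fun n => norm_nonneg _) _ hus
    intro n
    simp only [Real.norm_eq_abs, abs_mul, abs_pow]
    rw [abs_of_nonneg (show (0:ℝ) ≤ (n:ℝ) from Nat.cast_nonneg n)]
    have h1 : |z| ^ (n-1) ≤ R ^ (n-1) := pow_le_pow_left₀ (abs_nonneg z) (by linarith) _
    have h2 : R ^ (n-1) ≤ R ^ n := pow_le_pow_right₀ hR1 (Nat.sub_le n 1)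
    calc |c n| * ((n:ℝ) * |z| ^ (n-1)) ≤ |c n| * ((n:ℝ) * R ^ n) := by
          apply mul_le_mul_of_nonneg_left _ (abs_nonneg _)
          exact mul_le_mul_of_nonneg_left (le_trans h1 h2) (Nat.cast_nonneg n)
      _ = (n:ℝ) * |c n| * R ^ n := by ring
  rw [Summable.tsum_eq_zero_add hsum]
  simp only [Nat.cast_zero, zero_mul, mul_zero, zero_add]
  apply tsum_congr
  intro n
  simp only [Nat.add_sub_cancel, Nat.cast_add, Nat.cast_one]
  ring

/-- first-derivative coefficients -/
noncomputable def kD (a b : ℝ) (n : ℕ) : ℝ := ((n:ℝ)+1) * kC a b (n+1)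
/-- second-derivative coefficients -/
noncomputable def kE (a b : ℝ) (n : ℕ) : ℝ := ((n:ℝ)+1) * kD a b (n+1)

noncomputable def K0 (a b z : ℝ) : ℝ := ∑' n : ℕ, kC a b n * z ^ n
noncomputable def K1 (a b z : ℝ) : ℝ := ∑' n : ℕ, kD a b n * z ^ n
noncomputable def K2 (a b z : ℝ) : ℝ := ∑' n : ℕ, kE a b n * z ^ n

lemma good_kD (a b : ℝ) (hb : 0 < b) : Good (|a|+1) (kD a b) := good_shift (good_kC a b hb)
lemma good_kE (a b : ℝ) (hb : 0 < b) : Good (|a|+1) (kE a b) := good_shift (good_kD a b hb)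

lemma hasDerivAt_K0 (a b : ℝ) (hb : 0 < b) (z : ℝ) :
    HasDerivAt (K0 a b) (K1 a b z) z := good_hasDerivAt (good_kC a b hb) z

lemma hasDerivAt_K1 (a b : ℝ) (hb : 0 < b) (z : ℝ) :
    HasDerivAt (K1 a b) (K2 a b z) z := good_hasDerivAt (good_kD a b hb) z

lemma K0_zero (a b : ℝ) (hb : 0 < b) : K0 a b 0 = 1 := by
  unfold K0
  rw [Summable.tsum_eq_zero_add (good_summable (good_kC a b hb) 0)]
  simp [kC_zero]

lemma kummer_ode (a b : ℝ) (hb : 0 < b) (z : ℝ) :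
    z * K2 a b z + (b - z) * K1 a b z - a * K0 a b z = 0 := by
  have sC := good_summable (good_kC a b hb) z
  have sD := good_summable (good_kD a b hb) z
  have sE := good_summable (good_kE a b hb) z
  -- sum with z^(n+1) coefficients
  have hzE : z * K2 a b z = ∑' n : ℕ, kE a b n * z ^ (n+1) := by
    unfold K2; rw [← tsum_mul_left]; apply tsum_congr; intro n; rw [pow_succ]; ring
  have hzD : z * K1 a b z = ∑' n : ℕ, kD a b n * z ^ (n+1) := by
    unfold K1; rw [← tsum_mul_left]; apply tsum_congr; intro n; rw [pow_succ]; ring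
  have hbD : b * K1 a b z = ∑' n : ℕ, b * kD a b n * z ^ n := by
    unfold K1; rw [← tsum_mul_left]; apply tsum_congr; intro n; ring
  have haC : a * K0 a b z = ∑' n : ℕ, a * kC a b n * z ^ n := by
    unfold K0; rw [← tsum_mul_left]; apply tsum_congr; intro n; ring
  have sE' : Summable (fun n : ℕ => kE a b n * z ^ (n+1)) := by
    apply Summable.congr (sE.mul_right z); intro n; rw [pow_succ]; ring
  have sD' : Summable (fun n : ℕ => kD a b n * z ^ (n+1)) := by
    apply Summable.congr (sD.mul_right z); intro n; rw [pow_succ]; ring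
  have sbD : Summable (fun n : ℕ => b * kD a b n * z ^ n) := by
    apply Summable.congr (sD.mul_left b); intro n; ring
  have saC : Summable (fun n : ℕ => a * kC a b n * z ^ n) := by
    apply Summable.congr (sC.mul_left a); intro n; ring
  have hsplit : ∑' n : ℕ, (b * kD a b n * z ^ n - a * kC a b n * z ^ n)
      = (b * kD a b 0 - a * kC a b 0) +
        ∑' n : ℕ, (b * kD a b (n+1) * z ^ (n+1) - a * kC a b (n+1) * z ^ (n+1)) := by
    rw [Summable.tsum_eq_zero_add (sbD.sub saC)]
    simp
  have hcoef0 : b * kD a b 0 - a * kC a b 0 = 0 := by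
    have h := kC_succ a b hb 0
    simp only [Nat.cast_zero, zero_add, add_zero] at h
    unfold kD
    simp only [Nat.cast_zero, zero_add, one_mul, kC_zero] at *
    nlinarith
  have hcoef : ∀ n : ℕ, (kE a b n - kD a b n) + (b * kD a b (n+1) - a * kC a b (n+1)) = 0 := by
    intro n
    have h := kC_succ a b hb (n+1)
    unfold kE kD
    push_cast at h ⊢
    nlinarith [h]
  calc z * K2 a b z + (b - z) * K1 a b z - a * K0 a b z
      = (∑' n : ℕ, kE a b n * z ^ (n+1)) - (∑' n : ℕ, kD a b n * z ^ (n+1))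
        + ((∑' n : ℕ, b * kD a b n * z ^ n) - ∑' n : ℕ, a * kC a b n * z ^ n) := by
        rw [← hzE, ← hzD, ← hbD, ← haC]; ring
    _ = (∑' n : ℕ, (kE a b n * z ^ (n+1) - kD a b n * z ^ (n+1)))
        + ∑' n : ℕ, (b * kD a b n * z ^ n - a * kC a b n * z ^ n) := by
        rw [Summable.tsum_sub sE' sD', Summable.tsum_sub sbD saC]
    _ = (∑' n : ℕ, (kE a b n * z ^ (n+1) - kD a b n * z ^ (n+1)))
        + ∑' n : ℕ, (b * kD a b (n+1) * z ^ (n+1) - a * kC a b (n+1) * z ^ (n+1)) := by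
        rw [hsplit, hcoef0, zero_add]
    _ = ∑' n : ℕ, ((kE a b n * z ^ (n+1) - kD a b n * z ^ (n+1))
        + (b * kD a b (n+1) * z ^ (n+1) - a * kC a b (n+1) * z ^ (n+1))) := by
        rw [← Summable.tsum_add (sE'.sub sD')
          (((summable_nat_add_iff 1).mpr sbD).sub ((summable_nat_add_iff 1).mpr saC))]
    _ = ∑' n : ℕ, (0:ℝ) := by
        apply tsum_congr; intro n
        linear_combination (z ^ (n+1)) * hcoef n
    _ = 0 := tsum_zero

lemma lipschitz_field (α T : ℝ) (hα : 0 ≤ α) (hT : 0 ≤ T) (t : ℝ) :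
    LipschitzWith (Real.toNNReal (1 + 2*α + 2*T))
      (fun p : ℝ × ℝ => ((p.2, 2*α*p.1 - 2*(max (-T) (min T t))*p.2) : ℝ × ℝ)) := by
  set c := max (-T) (min T t) with hc
  have hc1 : -T ≤ c := le_max_left _ _
  have hc2 : c ≤ T := max_le (by linarith) (min_le_left _ _)
  apply LipschitzWith.of_dist_le_mul
  intro p q
  rw [Real.coe_toNNReal _ (by linarith)]
  simp only [Prod.dist_eq, Real.dist_eq]
  set M := max |p.1 - q.1| |p.2 - q.2| with hM
  have h1 : |p.1 - q.1| ≤ M := le_max_left _ _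
  have h2 : |p.2 - q.2| ≤ M := le_max_right _ _
  have hM0 : 0 ≤ M := le_trans (abs_nonneg _) h1
  apply max_le
  · nlinarith
  · have : 2*α*p.1 - 2*c*p.2 - (2*α*q.1 - 2*c*q.2) = 2*α*(p.1-q.1) - 2*c*(p.2-q.2) := by ring
    rw [this]
    calc |2*α*(p.1-q.1) - 2*c*(p.2-q.2)| ≤ |2*α*(p.1-q.1)| + |2*c*(p.2-q.2)| := abs_sub _ _
      _ = 2*α*|p.1-q.1| + 2*(|c| * |p.2-q.2|) := by
          rw [abs_mul, abs_mul, abs_mul, abs_mul]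
          simp [abs_of_nonneg hα]
          ring
      _ ≤ (1+2*α+2*T) * M := by
          have hcabs : |c| ≤ T := abs_le.mpr ⟨hc1, hc2⟩
          nlinarith [abs_nonneg (p.2 - q.2), abs_nonneg c,
            mul_le_mul_of_nonneg_left h2 (abs_nonneg c),
            mul_le_mul_of_nonneg_right hcabs (abs_nonneg (p.2-q.2)),
            mul_le_mul_of_nonneg_left h1 hα]

/-- Uniqueness: a solution of `ψ'' + 2ηψ' − 2αψ = 0` with `ψ 0 = 0`, `ψ' 0 = 0` vanishes. -/
lemma ode_unique (α : ℝ) (hα : 0 ≤ α) (ψ ψ1 : ℝ → ℝ)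
    (hd : ∀ t, HasDerivAt ψ (ψ1 t) t)
    (hd1 : ∀ t, HasDerivAt ψ1 (2*α*ψ t - 2*t*ψ1 t) t)
    (h0 : ψ 0 = 0) (h10 : ψ1 0 = 0) : ∀ t, ψ t = 0 := by
  intro η
  set T : ℝ := |η| + 1 with hT
  have hT0 : (0:ℝ) ≤ T := by positivity
  set v : ℝ → ℝ × ℝ → ℝ × ℝ :=
    fun t p => ((p.2, 2*α*p.1 - 2*(max (-T) (min T t))*p.2) : ℝ × ℝ) with hv
  have huniq := ODE_solution_unique_of_mem_Ioo (v := v) (s := fun _ => (univ : Set (ℝ × ℝ)))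
    (K := Real.toNNReal (1 + 2*α + 2*T))
    (fun t _ => (lipschitz_field α T hα hT0 t).lipschitzOnWith)
    (f := fun t => ((ψ t, ψ1 t) : ℝ × ℝ)) (g := fun _ => ((0,0) : ℝ × ℝ))
    (t₀ := 0) (a := -T) (b := T)
    (by simp only [mem_Ioo, hT]; constructor <;> linarith [abs_nonneg η])
    ?_ ?_ (by simp [h0, h10])
  · have hmem : η ∈ Ioo (-T) T := by
      constructor <;> rw [hT] <;> cases abs_cases η <;> linarith [abs_nonneg η]
    have := huniq hmem
    simpa using congrArg Prod.fst this
  · intro t ht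
    refine ⟨?_, trivial⟩
    have hclamp : max (-T) (min T t) = t := by
      rw [min_eq_right (le_of_lt ht.2), max_eq_right (le_of_lt ht.1)]
    have := (hd t).prodMk (hd1 t)
    simp only [hv, hclamp]
    exact this
  · intro t ht
    refine ⟨?_, trivial⟩
    simp only [hv]
    convert hasDerivAt_const t ((0,0) : ℝ × ℝ) using 1
    simp

lemma kummerM_eq (a b z : ℝ) : kummerM a b z = K0 a b z := rfl

lemma inner_deriv (t : ℝ) : HasDerivAt (fun η : ℝ => -η^2) (-(2*t)) t := by
  simpa using (hasDerivAt_pow 2 t).fun_neg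

end KummerAux

/-- For `α ≥ 0`, every twice differentiable solution of `φ'' + 2ηφ' - 2αφ = 0` is a linear
combination of `M(-α/2,1/2,-η²)` and `η M(-α/2+1/2,3/2,-η²)`. -/
theorem ode_general_solution
    (α : ℝ) (hα : 0 ≤ α) (φ : ℝ → ℝ)
    (hφ : ∀ η : ℝ, DifferentiableAt ℝ φ η)
    (hφ' : ∀ η : ℝ, DifferentiableAt ℝ (deriv φ) η)
    (hode : ∀ η : ℝ, deriv (deriv φ) η + 2 * η * deriv φ η - 2 * α * φ η = 0) :
    ∃ c₁ c₂ : ℝ, ∀ η : ℝ,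
      φ η = c₁ * kummerM (-α / 2) (1 / 2) (-η ^ 2) +
        c₂ * η * kummerM (-α / 2 + 1 / 2) (3 / 2) (-η ^ 2) := by
  set a : ℝ := -α / 2 with ha
  set a₂ : ℝ := -α / 2 + 1 / 2 with ha₂
  have hb₁ : (0:ℝ) < 1/2 := by norm_num
  have hb₂ : (0:ℝ) < 3/2 := by norm_num
  set c₁ : ℝ := φ 0 with hc₁
  set c₂ : ℝ := deriv φ 0 with hc₂
  -- the two explicit solutions and their derivatives
  set f₁ : ℝ → ℝ := fun η => K0 a (1/2) (-η^2) with hf₁def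
  set f₁' : ℝ → ℝ := fun η => K1 a (1/2) (-η^2) * (-(2*η)) with hf₁'def
  set f₂ : ℝ → ℝ := fun η => η * K0 a₂ (3/2) (-η^2) with hf₂def
  set f₂' : ℝ → ℝ := fun η => K0 a₂ (3/2) (-η^2) + η * (K1 a₂ (3/2) (-η^2) * (-(2*η)))
    with hf₂'def
  have hder₁ : ∀ t, HasDerivAt f₁ (f₁' t) t := fun t =>
    by have h := (hasDerivAt_K0 a (1/2) hb₁ (-t^2)).comp t (inner_deriv t); exact h
  have hder₁' : ∀ t, HasDerivAt f₁'
      (K2 a (1/2) (-t^2) * (-(2*t)) * (-(2*t)) + K1 a (1/2) (-t^2) * (-2)) t := by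
    intro t
    have h1 : HasDerivAt (fun η => K1 a (1/2) (-η^2)) (K2 a (1/2) (-t^2) * (-(2*t))) t :=
      by have h := (hasDerivAt_K1 a (1/2) hb₁ (-t^2)).comp t (inner_deriv t); exact h
    have h2 : HasDerivAt (fun η : ℝ => -(2*η)) (-2) t := by
      simpa using ((hasDerivAt_id t).const_mul (2:ℝ)).fun_neg
    exact h1.mul h2
  have hder₂ : ∀ t, HasDerivAt f₂ (f₂' t) t := by
    intro t
    have h1 : HasDerivAt (fun η => K0 a₂ (3/2) (-η^2)) (K1 a₂ (3/2) (-t^2) * (-(2*t))) t :=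
      by have h := (hasDerivAt_K0 a₂ (3/2) hb₂ (-t^2)).comp t (inner_deriv t); exact h
    have key : HasDerivAt (fun η => η * K0 a₂ (3/2) (-η^2))
        (1 * K0 a₂ (3/2) (-t^2) + t * (K1 a₂ (3/2) (-t^2) * (-(2*t)))) t :=
      (hasDerivAt_id' (𝕜 := ℝ) t).mul h1
    have hval : f₂' t = 1 * K0 a₂ (3/2) (-t^2) + t * (K1 a₂ (3/2) (-t^2) * (-(2*t))) := by
      simp only [hf₂'def]; ring
    rw [hval]; exact key
  have hder₂' : ∀ t, HasDerivAt f₂'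
      (K1 a₂ (3/2) (-t^2) * (-(2*t)) +
        (1 * (K1 a₂ (3/2) (-t^2) * (-(2*t))) +
          t * (K2 a₂ (3/2) (-t^2) * (-(2*t)) * (-(2*t)) + K1 a₂ (3/2) (-t^2) * (-2)))) t := by
    intro t
    have h1 : HasDerivAt (fun η => K0 a₂ (3/2) (-η^2)) (K1 a₂ (3/2) (-t^2) * (-(2*t))) t :=
      by have h := (hasDerivAt_K0 a₂ (3/2) hb₂ (-t^2)).comp t (inner_deriv t); exact h
    have h2 : HasDerivAt (fun η => K1 a₂ (3/2) (-η^2)) (K2 a₂ (3/2) (-t^2) * (-(2*t))) t :=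
      by have h := (hasDerivAt_K1 a₂ (3/2) hb₂ (-t^2)).comp t (inner_deriv t); exact h
    have h3 : HasDerivAt (fun η : ℝ => -(2*η)) (-2) t := by
      simpa using (hasDerivAt_id t).const_mul (2:ℝ) |>.fun_neg
    exact h1.add ((hasDerivAt_id' (𝕜 := ℝ) t).mul (h2.mul h3))
  -- the difference ψ and its derivative ψ1
  set ψ : ℝ → ℝ := fun η => φ η - c₁ * f₁ η - c₂ * f₂ η with hψdef
  set ψ1 : ℝ → ℝ := fun η => deriv φ η - c₁ * f₁' η - c₂ * f₂' η with hψ1def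
  have hd : ∀ t, HasDerivAt ψ (ψ1 t) t := fun t =>
    ((hφ t).hasDerivAt.sub ((hder₁ t).const_mul c₁)).sub ((hder₂ t).const_mul c₂)
  have hd1 : ∀ t, HasDerivAt ψ1 (2*α*ψ t - 2*t*ψ1 t) t := by
    intro t
    have hD : HasDerivAt ψ1
        (deriv (deriv φ) t
          - c₁ * (K2 a (1/2) (-t^2) * (-(2*t)) * (-(2*t)) + K1 a (1/2) (-t^2) * (-2))
          - c₂ * (K1 a₂ (3/2) (-t^2) * (-(2*t)) +
            (1 * (K1 a₂ (3/2) (-t^2) * (-(2*t))) +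
              t * (K2 a₂ (3/2) (-t^2) * (-(2*t)) * (-(2*t)) + K1 a₂ (3/2) (-t^2) * (-2))))) t :=
      ((hφ' t).hasDerivAt.sub ((hder₁' t).const_mul c₁)).sub ((hder₂' t).const_mul c₂)
    convert hD using 1
    have hk1 := kummer_ode a (1/2) hb₁ (-t^2)
    have hk2 := kummer_ode a₂ (3/2) hb₂ (-t^2)
    have hodet := hode t
    simp only [hψdef, hψ1def, hf₁def, hf₁'def, hf₂def, hf₂'def, ha, ha₂] at *
    linear_combination (-1 : ℝ) * hodet - (4*c₁) * hk1 - (4*t*c₂) * hk2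
  have h0 : ψ 0 = 0 := by
    simp only [hψdef, hf₁def, hf₂def]
    norm_num [K0_zero a (1/2) hb₁]
    rw [hc₁, sub_self]
  have h10 : ψ1 0 = 0 := by
    simp only [hψ1def, hf₁'def, hf₂'def]
    norm_num [K0_zero a₂ (3/2) hb₂]
    rw [hc₂, sub_self]
  refine ⟨c₁, c₂, fun η => ?_⟩
  have := ode_unique α hα ψ ψ1 hd hd1 h0 h10 η
  simp only [hψdef, hf₁def, hf₂def] at this
  rw [kummerM_eq, kummerM_eq]
  linarith [this]
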